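/- Let f ∈ ℂ[x,y]_d be a nonzero binary form of degree d ≥ 1 and let f_x = ∂f/∂x. If FR(f) = FR(f_x), then WR(f) = FR(f). -/

import Mathlib

open MvPolynomial

/-- The linear form `x + β y` in `ℂ[x,y]`. -/
noncomputable def linForm (β : ℂ) : MvPolynomial (Fin 2) ℂ := X 0 + C β * X 1

/-- The Waring rank of a binary form `f ∈ ℂ[x,y]_d`: the least `r` such that
`f = Σ_{k=1}^{r} λ_k L_k^d` with all `λ_k ∈ ℂ∖{0}` and `L_k` linear forms. -/
noncomputable def waringRank (d : ℕ) (f : MvPolynomial (Fin 2) ℂ) : ℕ :=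
  sInf {r : ℕ | ∃ (lam : Fin r → ℂ) (L : Fin r → MvPolynomial (Fin 2) ℂ),
    (∀ k, lam k ≠ 0) ∧ (∀ k, (L k).IsHomogeneous 1) ∧ f = ∑ k, C (lam k) * (L k) ^ d}

/-- The F-rank of a binary form `f ∈ ℂ[x,y]_d`: the least `r ≥ 0` such that
`f = Σ_{k=1}^{r} λ_k (x+β_k y)^d` for some `λ_k, β_k ∈ ℂ`. -/
noncomputable def fRank (d : ℕ) (f : MvPolynomial (Fin 2) ℂ) : ℕ :=
  sInf {r : ℕ | ∃ lam β : Fin r → ℂ, f = ∑ k, C (lam k) * (linForm (β k)) ^ d}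

open Finset

lemma deg2 (m : Fin 2 →₀ ℕ) : m.degree = m 0 + m 1 := by
  rw [Finsupp.degree_apply, Finset.sum_subset (Finset.subset_univ _), Fin.sum_univ_two]
  intro x _ hx
  exact Finsupp.notMem_support_iff.mp hx

lemma hom1 {L : MvPolynomial (Fin 2) ℂ} (hL : L.IsHomogeneous 1) :
    L = C (coeff (Finsupp.single 0 1) L) * X 0 + C (coeff (Finsupp.single 1 1) L) * X 1 := by
  apply MvPolynomial.ext
  intro m
  rw [coeff_add, coeff_C_mul, coeff_C_mul, coeff_X', coeff_X']
  by_cases h0 : (Finsupp.single (0 : Fin 2) 1 : Fin 2 →₀ ℕ) = m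
  · subst h0
    simp [Finsupp.single_eq_single_iff]
  by_cases h1 : (Finsupp.single (1 : Fin 2) 1 : Fin 2 →₀ ℕ) = m
  · subst h1
    simp [Finsupp.single_eq_single_iff]
  rw [if_neg h0, if_neg h1]
  have : coeff m L = 0 := by
    apply hL.coeff_eq_zero
    rw [deg2]
    intro hc
    rcases Nat.add_eq_one_iff.mp hc with ⟨ha, hb⟩ | ⟨ha, hb⟩
    · exact h1 (Finsupp.ext fun i => by fin_cases i <;> simp [Finsupp.single_apply, ha, hb])
    · exact h0 (Finsupp.ext fun i => by fin_cases i <;> simp [Finsupp.single_apply, ha, hb])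
  rw [this]; ring

lemma rootsum {n : ℕ} {ω : ℂ} (hω : IsPrimitiveRoot ω n) (t : ℕ) :
    ∑ k ∈ Finset.range n, (ω ^ t) ^ k = if n ∣ t then (n : ℂ) else 0 := by
  by_cases hdvd : n ∣ t
  · rw [if_pos hdvd, (hω.pow_eq_one_iff_dvd t).mpr hdvd]
    simp
  · rw [if_neg hdvd]
    have hne : ω ^ t ≠ 1 := fun hc => hdvd ((hω.pow_eq_one_iff_dvd t).mp hc)
    rw [geom_sum_eq hne, ← pow_mul, mul_comm t n, pow_mul, hω.pow_eq_one, one_pow]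
    simp

lemma keyid (d : ℕ) {ω : ℂ} (hω : IsPrimitiveRoot ω (d+1)) {i : ℕ} (hi : i ≤ d) :
    ∑ k ∈ Finset.range (d+1), C (ω ^ ((d + 1 - i) * k)) * linForm (ω ^ k) ^ d
      = C (((d:ℂ)+1) * (d.choose i)) * (X 0 ^ (d - i) * X 1 ^ i) := by
  have expand : ∀ k, C (ω ^ ((d + 1 - i) * k)) * linForm (ω ^ k) ^ d
      = ∑ j ∈ Finset.range (d+1),
          C ((ω ^ (d + 1 - i + (d - j))) ^ k * (d.choose j)) * (X 0 ^ j * X 1 ^ (d - j)) := by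
    intro k
    rw [linForm, add_pow, Finset.mul_sum]
    apply Finset.sum_congr rfl
    intro j hj
    rw [mul_pow, ← C_pow, ← pow_mul]
    have hexp : (d + 1 - i + (d - j)) * k = (d + 1 - i) * k + k * (d - j) := by ring
    rw [← pow_mul, hexp, pow_add, C_mul]
    have hcast : ((d.choose j : ℕ) : MvPolynomial (Fin 2) ℂ) = C ((d.choose j : ℕ) : ℂ) := by
      simp
    rw [hcast, map_mul]
    ring
  simp_rw [expand]
  rw [Finset.sum_comm]
  have inner : ∀ j ∈ Finset.range (d+1),
      ∑ k ∈ Finset.range (d+1), C ((ω ^ (d + 1 - i + (d - j))) ^ k * (d.choose j))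
        * ((X 0 : MvPolynomial (Fin 2) ℂ) ^ j * X 1 ^ (d - j))
      = (if j = d - i then C (((d:ℂ)+1) * (d.choose i)) * (X 0 ^ (d - i) * X 1 ^ i) else 0) := by
    intro j hj
    have hj' : j ≤ d := Nat.lt_succ_iff.mp (Finset.mem_range.mp hj)
    simp_rw [map_mul C, ← Finset.sum_mul, ← map_sum C, rootsum hω, apply_ite C]
    by_cases hcase : j = d - i
    · subst hcase
      have h1 : d - (d - i) = i := by omega
      have h2 : d + 1 - i + (d - (d - i)) = d + 1 := by omega
      rw [h2, if_pos (dvd_refl _), if_pos rfl, h1, Nat.choose_symm hi,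
        Nat.cast_add, Nat.cast_one]
    · have hP : ¬ ((d+1) ∣ (d + 1 - i + (d - j))) := by
        intro hdvd
        obtain ⟨c, hc⟩ := hdvd
        rcases c with _ | _ | c
        · omega
        · omega
        · have h2 : (d+1) * 2 ≤ (d+1) * (c+1+1) := Nat.mul_le_mul_left (d+1) (by omega)
          omega
      rw [if_neg hP, if_neg hcase]
      simp
  refine Eq.trans (Finset.sum_congr rfl inner) ?_
  rw [Finset.sum_ite_eq' (Finset.range (d+1)) (d - i)]
  rw [if_pos (Finset.mem_range.mpr (by omega))]

noncomputable abbrev Wspan (d : ℕ) : Submodule ℂ (MvPolynomial (Fin 2) ℂ) :=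
  Submodule.span ℂ (Set.range fun β : ℂ => linForm β ^ d)

lemma mono_mem (d i : ℕ) (hi : i ≤ d) :
    (X 0 : MvPolynomial (Fin 2) ℂ) ^ (d - i) * X 1 ^ i ∈ Wspan d := by
  obtain ⟨ω, hω⟩ : ∃ ω : ℂ, IsPrimitiveRoot ω (d+1) :=
    ⟨_, Complex.isPrimitiveRoot_exp (d+1) (Nat.succ_ne_zero d)⟩
  have hsum : ∑ k ∈ Finset.range (d+1), C (ω ^ ((d + 1 - i) * k)) * linForm (ω ^ k) ^ d
      ∈ Wspan d := by
    apply Submodule.sum_mem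
    intro k _
    rw [← smul_eq_C_mul]
    exact Submodule.smul_mem _ _ (Submodule.subset_span ⟨ω ^ k, rfl⟩)
  rw [keyid d hω hi] at hsum
  have hc : (((d:ℂ)+1) * (d.choose i)) ≠ 0 := by
    apply mul_ne_zero
    · have : ((d+1:ℕ):ℂ) ≠ 0 := Nat.cast_ne_zero.mpr d.succ_ne_zero
      push_cast at this
      exact this
    · exact_mod_cast Nat.cast_ne_zero.mpr (Nat.choose_pos hi).ne'
  have := Submodule.smul_mem (Wspan d) ((((d:ℂ)+1) * (d.choose i))⁻¹) hsum
  rwa [smul_eq_C_mul, ← mul_assoc, ← map_mul, inv_mul_cancel₀ hc, C_1, one_mul] at this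

lemma monomial_eq_two (m : Fin 2 →₀ ℕ) (c : ℂ) :
    monomial m c = C c * ((X 0 : MvPolynomial (Fin 2) ℂ) ^ (m 0) * X 1 ^ (m 1)) := by
  rw [monomial_eq]
  congr 1
  rw [Finsupp.prod_fintype _ _ (fun i => pow_zero _), Fin.prod_univ_two]

lemma hom_mem {d : ℕ} {f : MvPolynomial (Fin 2) ℂ} (hf : f.IsHomogeneous d) :
    f ∈ Wspan d := by
  rw [← support_sum_monomial_coeff f]
  apply Submodule.sum_mem
  intro m hm
  have hdeg : m 0 + m 1 = d := by
    rw [← deg2, Finsupp.degree_eq_weight_one]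
    exact hf (mem_support_iff.mp hm)
  have h0 : m 0 = d - m 1 := by omega
  rw [monomial_eq_two, h0, ← smul_eq_C_mul]
  exact Submodule.smul_mem _ _ (mono_mem d (m 1) (by omega))

lemma fr_nonempty {d : ℕ} {f : MvPolynomial (Fin 2) ℂ} (hf : f.IsHomogeneous d) :
    {r : ℕ | ∃ lam β : Fin r → ℂ, f = ∑ k, C (lam k) * (linForm (β k)) ^ d}.Nonempty := by
  have hmem := hom_mem hf
  rw [Wspan, Submodule.mem_span_set'] at hmem
  obtain ⟨n, c, g, hsum⟩ := hmem
  refine ⟨n, c, fun i => Classical.choose (g i).2, ?_⟩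
  rw [← hsum]
  apply Finset.sum_congr rfl
  intro k _
  rw [smul_eq_C_mul]
  congr 1
  exact (Classical.choose_spec (g k).2).symm

lemma linForm_hom (β : ℂ) : (linForm β).IsHomogeneous 1 := by
  rw [linForm]
  exact (isHomogeneous_X _ _).add ((isHomogeneous_X ℂ 1).C_mul β)

lemma sum_reindex {M : Type*} [AddCommMonoid M] {n : ℕ} (S : Finset (Fin n)) (g : Fin n → M) :
    ∑ k ∈ S, g k = ∑ j : Fin S.card, g (S.equivFin.symm j) := by
  rw [← Finset.sum_attach S g]
  exact (Equiv.sum_comp S.equivFin.symm (fun k : S => g k)).symm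

lemma fRank_le_card {e n : ℕ} {f : MvPolynomial (Fin 2) ℂ} (S : Finset (Fin n))
    (lam β : Fin n → ℂ) (hf : f = ∑ k ∈ S, C (lam k) * linForm (β k) ^ e) :
    fRank e f ≤ S.card := by
  apply Nat.sInf_le
  exact ⟨fun j => lam (S.equivFin.symm j), fun j => β (S.equivFin.symm j),
    by rw [hf, sum_reindex]⟩

lemma waringRank_mem_card {e n : ℕ} {f : MvPolynomial (Fin 2) ℂ} (T : Finset (Fin n))
    (lam β : Fin n → ℂ) (hlam : ∀ k ∈ T, lam k ≠ 0)
    (hf : f = ∑ k ∈ T, C (lam k) * linForm (β k) ^ e) :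
    T.card ∈ {r : ℕ | ∃ (lam : Fin r → ℂ) (L : Fin r → MvPolynomial (Fin 2) ℂ),
      (∀ k, lam k ≠ 0) ∧ (∀ k, (L k).IsHomogeneous 1) ∧ f = ∑ k, C (lam k) * (L k) ^ e} :=
  ⟨fun j => lam (T.equivFin.symm j), fun j => linForm (β (T.equivFin.symm j)),
    fun j => hlam _ (T.equivFin.symm j).2, fun _ => linForm_hom _,
    by rw [hf, sum_reindex]⟩

/-- For a nonzero binary form `f ∈ ℂ[x,y]_d`, `d ≥ 1`, with `f_x = ∂f/∂x`:
if `FR(f) = FR(f_x)` then `WR(f) = FR(f)`. -/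
theorem waringRank_eq_fRank_of_fRank_eq (d : ℕ) (hd : 1 ≤ d) (f : MvPolynomial (Fin 2) ℂ)
    (hf : f.IsHomogeneous d) (hf0 : f ≠ 0)
    (h : fRank d f = fRank (d - 1) (pderiv (0 : Fin 2) f)) :
    waringRank d f = fRank d f := by
  classical
  -- Step 1: an F-decomposition of f of length fRank d f
  have hfr : ∃ lam β : Fin (fRank d f) → ℂ,
      f = ∑ k, C (lam k) * linForm (β k) ^ d := Nat.sInf_mem (fr_nonempty hf)
  obtain ⟨lam, β, hdec⟩ := hfr
  -- Step 2: drop zero coefficients to get WR ≤ FR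
  have hdecT : f = ∑ k ∈ (univ.filter (fun k => lam k ≠ 0)), C (lam k) * linForm (β k) ^ d := by
    conv_lhs => rw [hdec]
    refine (Finset.sum_filter_of_ne ?_).symm
    intro x _ hx hl0
    exact hx (by rw [hl0, map_zero, zero_mul])
  have hWmemT := waringRank_mem_card _ lam β (fun k hk => (Finset.mem_filter.mp hk).2) hdecT
  have hWF : waringRank d f ≤ fRank d f :=
    le_trans (Nat.sInf_le hWmemT) (le_trans (Finset.card_filter_le _ _) (by simp))
  -- Step 3: a minimal Waring decomposition, of length r = waringRank d f
  have hwr : ∃ (lam' : Fin (waringRank d f) → ℂ)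
      (L : Fin (waringRank d f) → MvPolynomial (Fin 2) ℂ),
      (∀ k, lam' k ≠ 0) ∧ (∀ k, (L k).IsHomogeneous 1) ∧ f = ∑ k, C (lam' k) * (L k) ^ d :=
    Nat.sInf_mem (Set.nonempty_of_mem hWmemT)
  obtain ⟨lam', L, hlam', hL, hdecL⟩ := hwr
  set a : Fin (waringRank d f) → ℂ := fun k => coeff (Finsupp.single 0 1) (L k) with ha
  set b : Fin (waringRank d f) → ℂ := fun k => coeff (Finsupp.single 1 1) (L k) with hb
  have hLk : ∀ k, L k = C (a k) * X 0 + C (b k) * X 1 := fun k => hom1 (hL k)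
  -- Step 4: the partial derivative
  have hpL : ∀ k, pderiv (0 : Fin 2) (L k) = C (a k) := by
    intro k
    rw [hLk k, map_add, pderiv_C_mul, pderiv_C_mul, pderiv_X_self,
      pderiv_X_of_ne (by simp), mul_one, mul_zero, add_zero]
  have hterm : ∀ k, pderiv (0 : Fin 2) (C (lam' k) * L k ^ d)
      = C (lam' k * d * a k) * (L k) ^ (d - 1) := by
    intro k
    rw [pderiv_C_mul, pderiv_pow, hpL k]
    rw [show ((d : MvPolynomial (Fin 2) ℂ)) = C ((d : ℕ) : ℂ) by simp]
    rw [map_mul, map_mul]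
    ring
  have hcomb : ∀ k, a k ≠ 0 → L k = C (a k) * linForm (b k / a k) := by
    intro k hak
    rw [linForm, hLk k, mul_add, ← mul_assoc, ← map_mul, mul_div_cancel₀ _ hak]
  have step1 : pderiv (0 : Fin 2) f
      = ∑ k ∈ univ.filter (fun k => a k ≠ 0), C (lam' k * d * a k) * (L k) ^ (d - 1) := by
    conv_lhs => rw [hdecL]
    rw [map_sum]
    simp_rw [hterm]
    refine (Finset.sum_filter_of_ne ?_).symm
    intro x _ hx ha0
    exact hx (by rw [ha0, mul_zero, map_zero, zero_mul])
  have hfx : pderiv (0 : Fin 2) f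
      = ∑ k ∈ univ.filter (fun k => a k ≠ 0),
          C (lam' k * d * a k ^ d) * linForm (b k / a k) ^ (d - 1) := by
    rw [step1]
    apply Finset.sum_congr rfl
    intro k hk
    have hak : a k ≠ 0 := (Finset.mem_filter.mp hk).2
    rw [hcomb k hak, mul_pow, ← C_pow, ← mul_assoc, ← map_mul]
    congr 2
    have hpow : a k * a k ^ (d - 1) = a k ^ d := by
      rw [← pow_succ']
      congr 1
      omega
    rw [mul_assoc, hpow]
  have h1 : fRank (d - 1) (pderiv (0 : Fin 2) f) ≤ (univ.filter (fun k => a k ≠ 0)).card :=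
    fRank_le_card _ (fun k => lam' k * d * a k ^ d) (fun k => b k / a k) hfx
  -- Step 5: all the a k are nonzero
  have hScard : (univ.filter (fun k => a k ≠ 0)).card = waringRank d f := by
    by_contra hne
    have hle : (univ.filter (fun k => a k ≠ 0)).card ≤ waringRank d f :=
      le_trans (Finset.card_filter_le _ _) (by simp)
    have : fRank d f ≤ (univ.filter (fun k => a k ≠ 0)).card := h ▸ h1
    omega
  have hall : ∀ k, a k ≠ 0 := by
    intro k
    have hSuniv : univ.filter (fun k => a k ≠ 0) = univ :=
      Finset.eq_univ_of_card _ (by simpa using hScard)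
    have hk : k ∈ univ.filter (fun k => a k ≠ 0) := by
      rw [hSuniv]; exact Finset.mem_univ k
    exact (Finset.mem_filter.mp hk).2
  -- Step 6: FR ≤ WR
  have hdec2 : f = ∑ k ∈ (univ : Finset (Fin (waringRank d f))),
      C (lam' k * a k ^ d) * linForm (b k / a k) ^ d := by
    conv_lhs => rw [hdecL]
    apply Finset.sum_congr rfl
    intro k _
    rw [hcomb k (hall k), mul_pow, ← C_pow, ← mul_assoc, ← map_mul]
  have hFW : fRank d f ≤ waringRank d f :=
    le_trans (fRank_le_card univ _ _ hdec2) (by simp)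
  omega
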